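/- There is no positive integer $d$ that is both a perfect square and a congruent number; in particular, the elliptic curve $y^2 = x^3 - x$ has no rational points with $y \neq 0$. -/

import Mathlib

-- helper: g^2 ∣ 2 k^2 → g ∣ k  (ℕ)
lemma sq_dvd_two_mul_sq {g k : ℕ} (h : g ^ 2 ∣ 2 * k ^ 2) : g ∣ k := by
  rcases eq_or_ne k 0 with rfl | hk
  · simp
  rcases eq_or_ne g 0 with rfl | hg
  · have h0 : 2 * k ^ 2 = 0 := by simpa using h
    have : k ^ 2 ≠ 0 := pow_ne_zero _ hk
    omega
  have h2k : 2 * k ^ 2 ≠ 0 := by positivity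
  rw [← Nat.factorization_le_iff_dvd hg hk]
  have hle := (Nat.factorization_le_iff_dvd (pow_ne_zero 2 hg) h2k).mpr h
  intro p
  have h1 := hle p
  rw [Nat.factorization_pow, Nat.factorization_mul (by norm_num) (pow_ne_zero 2 hk),
    Nat.factorization_pow] at h1
  have h2 : (Nat.factorization 2) p ≤ 1 := by
    rw [Nat.Prime.factorization Nat.prime_two, Finsupp.single_apply]
    split <;> norm_num
  simp only [Finsupp.coe_add, Finsupp.coe_smul, Pi.add_apply, Pi.smul_apply, smul_eq_mul] at h1 ⊢
  omega

lemma isCoprime_two_of_odd {t : ℤ} (h : t % 2 = 1) : IsCoprime t 2 := by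
  refine ⟨-1, (t + 1) / 2, ?_⟩
  omega

lemma pos_sq_of_coprime {a b c : ℤ} (h : IsCoprime a b) (heq : a * b = c ^ 2)
    (ha : 0 < a) : ∃ a0 : ℤ, 0 < a0 ∧ a = a0 ^ 2 := by
  obtain ⟨a0, h1 | h1⟩ := Int.sq_of_isCoprime h heq
  · refine ⟨|a0|, ?_, by rwa [sq_abs]⟩
    rcases eq_or_ne a0 0 with rfl | h0
    · simp at h1; omega
    · exact abs_pos.mpr h0
  · exfalso; nlinarith [sq_nonneg a0]

/-- The descent step. -/
lemma descent_step (x y z k : ℤ) (hx : 0 < x) (hy : 0 < y) (hz : 0 < z)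
    (hxodd : x % 2 = 1) (hco : Int.gcd x y = 1)
    (heq : x ^ 2 + y ^ 2 = z ^ 2) (harea : x * y = 2 * k ^ 2) :
    ∃ X Y Z K : ℤ, 0 < X ∧ 0 < Y ∧ X ^ 2 + Y ^ 2 = Z ^ 2 ∧ X * Y = 2 * K ^ 2 ∧
      Z.natAbs < z.natAbs := by
  have hpt : PythagoreanTriple x y z := by
    unfold PythagoreanTriple; linear_combination heq
  obtain ⟨m, n, hxe, hye, hze, hmn, hpar, hm0⟩ :=
    hpt.coprime_classification' hco hxodd hz
  have hmne : m ≠ 0 := by rintro rfl; simp at hye; omega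
  have hmpos : 0 < m := lt_of_le_of_ne hm0 (Ne.symm hmne)
  have hnpos : 0 < n := by
    by_contra hle
    push_neg at hle
    have h1 : 2 * m * n ≤ 0 := by
      have := mul_nonpos_of_nonneg_of_nonpos (by positivity : (0:ℤ) ≤ 2 * m) hle
      linarith [this]
    rw [hye] at hy; linarith
  have hmn' : n < m := by
    have h1 : n ^ 2 < m ^ 2 := by rw [hxe] at hx; linarith
    by_contra hle
    push_neg at hle
    have := pow_le_pow_left₀ hmpos.le hle 2
    linarith
  have hsubpos : 0 < m - n := by omega
  have haddpos : 0 < m + n := by omega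
  have hprod : m * (n * ((m - n) * (m + n))) = k ^ 2 := by
    have h2 : (2 : ℤ) * (m * (n * ((m - n) * (m + n)))) = 2 * k ^ 2 := by
      rw [← harea, hxe, hye]; ring
    linarith
  -- coprimality facts
  have hcmn : IsCoprime m n := Int.isCoprime_iff_gcd_eq_one.mpr hmn
  have hc1 : IsCoprime m (m - n) := by
    have h := (hcmn.neg_right).add_mul_left_right 1
    rwa [show -n + m * 1 = m - n by ring] at h
  have hc2 : IsCoprime m (m + n) := by
    have h := hcmn.add_mul_left_right 1
    rwa [show n + m * 1 = m + n by ring] at h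
  have hc3 : IsCoprime n (m - n) := by
    have h := (hcmn.symm).add_mul_left_right (-1)
    rwa [show m + n * (-1) = m - n by ring] at h
  have hc4 : IsCoprime n (m + n) := by
    have h := (hcmn.symm).add_mul_left_right 1
    rwa [show m + n * 1 = m + n by ring] at h
  have hsubodd : (m - n) % 2 = 1 := by omega
  have hc5 : IsCoprime (m - n) (m + n) := by
    have h2n : IsCoprime (m - n) (2 * n) :=
      (isCoprime_two_of_odd hsubodd).mul_right hc3.symm
    have h := h2n.add_mul_left_right 1
    rwa [show 2 * n + (m - n) * 1 = m + n by ring] at h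
  -- each factor is a perfect square
  obtain ⟨p, hp0, hpm⟩ :=
    pos_sq_of_coprime (hcmn.mul_right (hc1.mul_right hc2)) hprod hmpos
  have hprod2 : n * (m * ((m - n) * (m + n))) = k ^ 2 := by linear_combination hprod
  obtain ⟨q, hq0, hqn⟩ :=
    pos_sq_of_coprime (hcmn.symm.mul_right (hc3.mul_right hc4)) hprod2 hnpos
  have hprod3 : (m - n) * (m * (n * (m + n))) = k ^ 2 := by linear_combination hprod
  obtain ⟨r, hr0, hrs⟩ :=
    pos_sq_of_coprime (hc1.symm.mul_right (hc3.symm.mul_right hc5)) hprod3 hsubpos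
  have hprod4 : (m + n) * (m * (n * (m - n))) = k ^ 2 := by linear_combination hprod
  obtain ⟨t, ht0, hts⟩ :=
    pos_sq_of_coprime (hc2.symm.mul_right (hc4.symm.mul_right hc5.symm)) hprod4 haddpos
  -- t and r are odd
  have htodd : t % 2 = 1 := by
    rcases Int.even_or_odd t with ⟨w, hw⟩ | ⟨w, hw⟩
    · exfalso
      have : m + n = 4 * w ^ 2 := by
        rw [hts, hw]; ring
      omega
    · omega
  have hrodd : r % 2 = 1 := by
    rcases Int.even_or_odd r with ⟨w, hw⟩ | ⟨w, hw⟩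
    · exfalso
      have : m - n = 4 * w ^ 2 := by
        rw [hrs, hw]; ring
      omega
    · omega
  obtain ⟨u, hu⟩ : ∃ u, t = 2 * u + 1 := ⟨(t - 1) / 2, by omega⟩
  obtain ⟨v, hv⟩ : ∃ v, r = 2 * v + 1 := ⟨(r - 1) / 2, by omega⟩
  -- n must be even (else contradiction)
  have hneven : n % 2 = 0 := by
    by_contra hodd
    have h2n : 2 * n = 4 * (u ^ 2 + u - v ^ 2 - v) := by
      linear_combination hts - hrs + (t + 2 * u + 1) * hu - (r + 2 * v + 1) * hv
    omega
  have hmodd : m % 2 = 1 := by omega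
  -- q is even
  obtain ⟨q₀, hq₀⟩ : ∃ q₀, q = 2 * q₀ := by
    rcases Int.even_or_odd q with ⟨w, hw⟩ | ⟨w, hw⟩
    · exact ⟨w, by omega⟩
    · exfalso
      have : n = 4 * (w ^ 2 + w) + 1 := by
        rw [hqn, hw]; ring
      omega
  -- the new triple
  refine ⟨u + v + 1, u - v, p, q₀, ?_, ?_, ?_, ?_, ?_⟩
  · omega
  · -- u - v > 0 since t > r
    have htr : r < t := by
      have h1 : r ^ 2 < t ^ 2 := by rw [← hts, ← hrs]; linarith
      by_contra hle
      push_neg at hle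
      have := pow_le_pow_left₀ ht0.le hle 2
      linarith
    omega
  · -- (u+v+1)^2 + (u-v)^2 = p^2
    have h2 : 2 * ((u + v + 1) ^ 2 + (u - v) ^ 2) = 2 * p ^ 2 := by
      linear_combination -hts - hrs + 2 * hpm - (t + 2 * u + 1) * hu - (r + 2 * v + 1) * hv
    exact mul_left_cancel₀ (by norm_num : (2:ℤ) ≠ 0) h2
  · -- (u+v+1)*(u-v) = 2*q₀^2
    have h4 : 4 * ((u + v + 1) * (u - v)) = 4 * (2 * q₀ ^ 2) := by
      linear_combination -hts + hrs + 2 * hqn + 2 * (q + 2 * q₀) * hq₀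
        - (t + 2 * u + 1) * hu + (r + 2 * v + 1) * hv
    exact mul_left_cancel₀ (by norm_num : (4:ℤ) ≠ 0) h4
  · -- p < z
    have hpz : p < z := by
      have hz2 : z = p ^ 4 + n ^ 2 := by rw [hze, hpm]; ring
      have hp1 : (1:ℤ) ≤ p := hp0
      have h1 : p ≤ p ^ 4 := le_self_pow₀ hp1 (by norm_num)
      have h2 : (1:ℤ) ≤ n ^ 2 := by
        have hn1 : (1:ℤ) ≤ n := hnpos
        calc (1:ℤ) = 1 ^ 2 := by norm_num
        _ ≤ n ^ 2 := pow_le_pow_left₀ (by norm_num) hn1 2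
      linarith
    omega

/-- No positive Pythagorean triple has area twice a perfect square... i.e. area a square. -/
lemma no_triple_sq_area : ∀ N : ℕ, ∀ x y z k : ℤ, z.natAbs ≤ N →
    0 < x → 0 < y → x ^ 2 + y ^ 2 = z ^ 2 → x * y = 2 * k ^ 2 → False := by
  intro N
  induction N with
  | zero =>
    intro x y z k hN hx hy heq _
    have hz : z = 0 := by omega
    rw [hz] at heq; nlinarith
  | succ N ih =>
    intro x y z k hN hx hy heq harea
    have hzne : z ≠ 0 := by rintro rfl; nlinarith
    have hzpos : 0 < |z| := abs_pos.mpr hzne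
    have heq1 : x ^ 2 + y ^ 2 = |z| ^ 2 := by rw [sq_abs]; exact heq
    -- gcd reduction
    have hgpos : 0 < Int.gcd x y := Int.gcd_pos_of_ne_zero_left y hx.ne'
    set g : ℤ := (Int.gcd x y : ℤ) with hg
    have hgpos' : 0 < g := by rw [hg]; exact_mod_cast hgpos
    obtain ⟨x', hx'⟩ : g ∣ x := Int.gcd_dvd_left x y
    obtain ⟨y', hy'⟩ : g ∣ y := Int.gcd_dvd_right x y
    have hpt : PythagoreanTriple x y |z| := by
      unfold PythagoreanTriple; linear_combination heq1
    obtain ⟨z', hz'⟩ : g ∣ |z| := hpt.gcd_dvd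
    have hx'pos : 0 < x' := by
      rcases mul_pos_iff.mp (hx' ▸ hx) with ⟨_, h⟩ | ⟨h, _⟩
      · exact h
      · linarith
    have hy'pos : 0 < y' := by
      rcases mul_pos_iff.mp (hy' ▸ hy) with ⟨_, h⟩ | ⟨h, _⟩
      · exact h
      · linarith
    have hz'pos : 0 < z' := by
      rcases mul_pos_iff.mp (hz' ▸ hzpos) with ⟨_, h⟩ | ⟨h, _⟩
      · exact h
      · linarith
    have heq' : x' ^ 2 + y' ^ 2 = z' ^ 2 := by
      have h2 : g ^ 2 * (x' ^ 2 + y' ^ 2) = g ^ 2 * z' ^ 2 := by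
        linear_combination heq1 - (x + g * x') * hx' - (y + g * y') * hy'
          + (|z| + g * z') * hz'
      exact mul_left_cancel₀ (pow_ne_zero 2 hgpos'.ne') h2
    have h2k : 2 * k ^ 2 = g ^ 2 * (x' * y') := by
      linear_combination -harea + y * hx' + g * x' * hy'
    have hdvd : g ^ 2 ∣ 2 * k ^ 2 := ⟨x' * y', h2k⟩
    have hdn : (Int.gcd x y) ^ 2 ∣ 2 * k.natAbs ^ 2 := by
      have h1 := Int.natAbs_dvd_natAbs.mpr hdvd
      simpa [hg, Int.natAbs_mul, Int.natAbs_pow] using h1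
    have hgk : g ∣ (k.natAbs : ℤ) := by
      rw [hg]; exact Int.natCast_dvd_natCast.mpr (sq_dvd_two_mul_sq hdn)
    obtain ⟨k', hk'⟩ := hgk
    have hk2 : k ^ 2 = g ^ 2 * k' ^ 2 := by
      rw [← sq_abs k, Int.abs_eq_natAbs, hk']; ring
    have harea' : x' * y' = 2 * k' ^ 2 := by
      have h3 : g ^ 2 * (x' * y') = g ^ 2 * (2 * k' ^ 2) := by
        linear_combination -h2k + 2 * hk2
      exact mul_left_cancel₀ (pow_ne_zero 2 hgpos'.ne') h3
    have hco' : Int.gcd x' y' = 1 := by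
      have hxq : x / g = x' := by rw [hx']; exact Int.mul_ediv_cancel_left _ hgpos'.ne'
      have hyq : y / g = y' := by rw [hy']; exact Int.mul_ediv_cancel_left _ hgpos'.ne'
      have h := Int.gcd_div_gcd_div_gcd (i := x) (j := y) hgpos
      rwa [← hg, hxq, hyq] at h
    -- not both even
    have hnb : ¬(x' % 2 = 0 ∧ y' % 2 = 0) := by
      rintro ⟨h1, h2⟩
      have hd : (2 : ℤ) ∣ Int.gcd x' y' := Int.dvd_coe_gcd (by omega) (by omega)
      rw [hco'] at hd
      norm_num at hd
    -- not both odd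
    have hno : ¬(x' % 2 = 1 ∧ y' % 2 = 1) := by
      rintro ⟨h1, h2⟩
      obtain ⟨a, ha⟩ : ∃ a, x' = 2 * a + 1 := ⟨(x' - 1) / 2, by omega⟩
      obtain ⟨b, hb⟩ : ∃ b, y' = 2 * b + 1 := ⟨(y' - 1) / 2, by omega⟩
      have hz2 : z' * z' = 4 * (a ^ 2 + a + b ^ 2 + b) + 2 := by
        linear_combination -heq' + (x' + 2 * a + 1) * ha + (y' + 2 * b + 1) * hb
      have := Int.sq_ne_two_mod_four z'
      omega
    have hzle : z'.natAbs ≤ N + 1 := by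
      have hle : z' ≤ |z| := by
        rw [hz']
        exact le_mul_of_one_le_left hz'pos.le hgpos'
      rw [Int.abs_eq_natAbs] at hle
      omega
    have hstep : ∃ X Y Z K : ℤ, 0 < X ∧ 0 < Y ∧ X ^ 2 + Y ^ 2 = Z ^ 2 ∧
        X * Y = 2 * K ^ 2 ∧ Z.natAbs < z'.natAbs := by
      rcases Int.emod_two_eq x' with h1 | h1
      · have h2 : y' % 2 = 1 := by
          rcases Int.emod_two_eq y' with h2 | h2
          · exact absurd ⟨h1, h2⟩ hnb
          · exact h2
        exact descent_step y' x' z' k' hy'pos hx'pos hz'pos h2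
          (by rwa [Int.gcd_comm]) (by linear_combination heq') (by linear_combination harea')
      · exact descent_step x' y' z' k' hx'pos hy'pos hz'pos h1 hco' heq' harea'
    obtain ⟨X, Y, Z, K, hX, hY, hE, hA, hlt⟩ := hstep
    exact ih X Y Z K (by omega) hX hY hE hA

def IsCongruentNumber (n : ℕ) : Prop :=
  ∃ a b c : ℚ, 0 < a ∧ 0 < b ∧ 0 < c ∧ a ^ 2 + b ^ 2 = c ^ 2 ∧ a * b = 2 * n

theorem stmt_14 :
    (¬ ∃ d : ℕ, 0 < d ∧ (∃ s : ℕ, d = s ^ 2) ∧ IsCongruentNumber d) ∧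
      (∀ x y : ℚ, y ^ 2 = x ^ 3 - x → y = 0) := by
  have main : ¬ ∃ d : ℕ, 0 < d ∧ (∃ s : ℕ, d = s ^ 2) ∧ IsCongruentNumber d := by
    rintro ⟨d, hd, ⟨s, rfl⟩, a, b, c, ha, hb, hc, habc, harea⟩
    have hs : 0 < s := by
      rcases Nat.eq_zero_or_pos s with rfl | h
      · simp at hd
      · exact h
    have hda : (0:ℚ) < (a.den : ℚ) := by exact_mod_cast a.pos
    have hdb : (0:ℚ) < (b.den : ℚ) := by exact_mod_cast b.pos
    have hdc : (0:ℚ) < (c.den : ℚ) := by exact_mod_cast c.pos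
    have haq : (a.num : ℚ) = a * (a.den : ℚ) :=
      (div_eq_iff hda.ne').mp (Rat.num_div_den a)
    have hbq : (b.num : ℚ) = b * (b.den : ℚ) :=
      (div_eq_iff hdb.ne').mp (Rat.num_div_den b)
    have hcq : (c.num : ℚ) = c * (c.den : ℚ) :=
      (div_eq_iff hdc.ne').mp (Rat.num_div_den c)
    set A : ℤ := a.num * b.den * c.den with hA
    set B : ℤ := b.num * a.den * c.den with hB
    set C : ℤ := c.num * a.den * b.den with hC
    set K : ℤ := s * (a.den * b.den * c.den) with hK
    have hApos : 0 < A := by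
      have := Rat.num_pos.mpr ha
      positivity
    have hBpos : 0 < B := by
      have := Rat.num_pos.mpr hb
      positivity
    have hCq : (A:ℚ) ^ 2 + (B:ℚ) ^ 2 = (C:ℚ) ^ 2 := by
      rw [hA, hB, hC]
      push_cast
      rw [haq, hbq, hcq]
      linear_combination ((a.den:ℚ) * b.den * c.den) ^ 2 * habc
    have hCZ : A ^ 2 + B ^ 2 = C ^ 2 := by exact_mod_cast hCq
    have hKq : (A:ℚ) * (B:ℚ) = 2 * (K:ℚ) ^ 2 := by
      rw [hA, hB, hK]
      push_cast
      rw [haq, hbq]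
      have harea' : a * b = 2 * (s:ℚ) ^ 2 := by
        rw [harea]; push_cast; ring
      linear_combination ((a.den:ℚ) * b.den * c.den) ^ 2 * harea'
    have hKZ : A * B = 2 * K ^ 2 := by exact_mod_cast hKq
    exact no_triple_sq_area C.natAbs A B C K le_rfl hApos hBpos hCZ hKZ
  refine ⟨main, ?_⟩
  intro x y hxy
  by_contra hy
  apply main
  refine ⟨1, one_pos, ⟨1, by norm_num⟩, ?_⟩
  have hyabs : (0:ℚ) < |y| := abs_pos.mpr hy
  have hy2 : (0:ℚ) < y ^ 2 := by positivity
  have hx0 : x ≠ 0 := by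
    rintro rfl
    rw [show (0:ℚ) ^ 3 - 0 = 0 by ring] at hxy
    exact hy (pow_eq_zero_iff (by norm_num) |>.mp hxy)
  have hx1 : x ^ 2 - 1 ≠ 0 := by
    intro h
    have : y ^ 2 = 0 := by rw [hxy]; linear_combination x * h
    exact hy (pow_eq_zero_iff (by norm_num) |>.mp this)
  refine ⟨|x ^ 2 - 1| / |y|, |2 * x| / |y|, (x ^ 2 + 1) / |y|, ?_, ?_, ?_, ?_, ?_⟩
  · exact div_pos (abs_pos.mpr hx1) hyabs
  · exact div_pos (abs_pos.mpr (by intro h; exact hx0 (by linarith [h] ))) hyabs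
  · exact div_pos (by positivity) hyabs
  · rw [div_pow, div_pow, div_pow, sq_abs, sq_abs, sq_abs, ← add_div,
      div_eq_div_iff (ne_of_gt hy2) (ne_of_gt hy2)]
    ring
  · have h1 : (x ^ 2 - 1) * (2 * x) = 2 * y ^ 2 := by linear_combination -2 * hxy
    rw [div_mul_div_comm, ← abs_mul, h1, abs_of_nonneg (by positivity : (0:ℚ) ≤ 2 * y ^ 2),
      abs_mul_abs_self, ← pow_two, mul_div_assoc, div_self (ne_of_gt hy2)]
    norm_num
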